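/- Let L be the Sturm–Liouville operator Lφ = −φ'' + Q(y)φ on (0,1) with Dirichlet boundary conditions, Q as above for the oscillatory shear U_n. If λ₂ is the second eigenvalue of L (whose eigenfunction φ₂ has exactly one zero z ∈ (0,1)), then λ₂ ≥ 0. -/

import Mathlib

open Real Set

/-- The Rayleigh-quotient potential of the oscillatory shear `U_n`. -/
noncomputable def oscQ (n : ℕ) (A : ℝ) (y : ℝ) : ℝ :=
  (-16 * π ^ 2 * n * A * Real.sin (4 * n * π * y)) /
    (y - 1/2 + (A / n) * Real.sin (4 * n * π * y))

noncomputable def oscPhi0 (n : ℕ) (A : ℝ) (y : ℝ) : ℝ :=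
  y - 1/2 + (A / n) * Real.sin (4 * n * π * y)

noncomputable def oscPhi0' (n : ℕ) (A : ℝ) (y : ℝ) : ℝ :=
  1 + 4 * π * A * Real.cos (4 * n * π * y)

noncomputable def oscPhi0'' (n : ℕ) (A : ℝ) (y : ℝ) : ℝ :=
  -16 * π ^ 2 * n * A * Real.sin (4 * n * π * y)

lemma oscHasDeriv1 (n : ℕ) (hn : 1 ≤ n) (A : ℝ) (y : ℝ) :
    HasDerivAt (oscPhi0 n A) (oscPhi0' n A y) y := by
  have hn0 : (n : ℝ) ≠ 0 := by positivity
  have h1 : HasDerivAt (fun t : ℝ => 4 * n * π * t) (4 * n * π) y := by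
    simpa using (hasDerivAt_id y).const_mul (4 * n * π)
  have h2 : HasDerivAt (fun t : ℝ => Real.sin (4 * n * π * t))
      (Real.cos (4 * n * π * y) * (4 * n * π)) y :=
    (Real.hasDerivAt_sin _).comp y h1
  have h3 : HasDerivAt (fun t : ℝ => t - 1/2 + (A / n) * Real.sin (4 * n * π * t))
      (1 + (A / n) * (Real.cos (4 * n * π * y) * (4 * n * π))) y := by
    have := ((hasDerivAt_id y).sub_const (1/2)).add (h2.const_mul (A / n))
    exact this
  have heq : 1 + (A / n) * (Real.cos (4 * n * π * y) * (4 * n * π)) = oscPhi0' n A y := by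
    unfold oscPhi0'; field_simp
  rw [heq] at h3
  exact h3

lemma oscHasDeriv2 (n : ℕ) (hn : 1 ≤ n) (A : ℝ) (y : ℝ) :
    HasDerivAt (oscPhi0' n A) (oscPhi0'' n A y) y := by
  have h1 : HasDerivAt (fun t : ℝ => 4 * n * π * t) (4 * n * π) y := by
    simpa using (hasDerivAt_id y).const_mul (4 * n * π)
  have h2 : HasDerivAt (fun t : ℝ => Real.cos (4 * n * π * t))
      (-Real.sin (4 * n * π * y) * (4 * n * π)) y :=
    (Real.hasDerivAt_cos _).comp y h1
  have h3 : HasDerivAt (fun t : ℝ => 1 + 4 * π * A * Real.cos (4 * n * π * t))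
      (0 + 4 * π * A * (-Real.sin (4 * n * π * y) * (4 * n * π))) y :=
    (hasDerivAt_const y 1).add (h2.const_mul (4 * π * A))
  have heq : 0 + 4 * π * A * (-Real.sin (4 * n * π * y) * (4 * n * π)) = oscPhi0'' n A y := by
    unfold oscPhi0''; ring
  rw [heq] at h3
  exact h3

lemma oscPhi0'_pos (n : ℕ) (A : ℝ) (hA1 : 1 / (8 * π) < A) (hA2 : A < 1 / (4 * π)) (y : ℝ) :
    0 < oscPhi0' n A y := by
  have hπ : 0 < π := Real.pi_pos
  have hA0 : 0 < A := lt_trans (by positivity) hA1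
  have h4 : 4 * π * A < 1 := by
    rw [lt_div_iff₀ (by positivity : (0:ℝ) < 4 * π)] at hA2
    linarith
  have hc : -1 ≤ Real.cos (4 * n * π * y) := Real.neg_one_le_cos _
  unfold oscPhi0'
  nlinarith [mul_le_mul_of_nonneg_left hc (show (0:ℝ) ≤ 4 * π * A by positivity)]

lemma oscPhi0_strictMono (n : ℕ) (hn : 1 ≤ n) (A : ℝ)
    (hA1 : 1 / (8 * π) < A) (hA2 : A < 1 / (4 * π)) : StrictMono (oscPhi0 n A) := by
  apply strictMono_of_deriv_pos
  intro y
  rw [(oscHasDeriv1 n hn A y).deriv]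
  exact oscPhi0'_pos n A hA1 hA2 y

lemma oscPhi0_half (n : ℕ) (A : ℝ) : oscPhi0 n A (1/2) = 0 := by
  unfold oscPhi0
  have : 4 * (n:ℝ) * π * (1/2) = ((2 * n : ℤ) : ℝ) * π := by push_cast; ring
  rw [this, Real.sin_int_mul_pi]
  ring

lemma oscQ_mul (n : ℕ) (hn : 1 ≤ n) (A : ℝ)
    (hA1 : 1 / (8 * π) < A) (hA2 : A < 1 / (4 * π)) (y : ℝ) :
    oscQ n A y * oscPhi0 n A y = oscPhi0'' n A y := by
  rcases eq_or_ne (oscPhi0 n A y) 0 with h | h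
  · have hy : y = 1/2 := by
      have := (oscPhi0_strictMono n hn A hA1 hA2).injective
        (h.trans (oscPhi0_half n A).symm)
      exact this
    subst hy
    have hs : Real.sin (4 * (n:ℝ) * π * (1/2)) = 0 := by
      have : 4 * (n:ℝ) * π * (1/2) = ((2 * n : ℤ) : ℝ) * π := by push_cast; ring
      rw [this, Real.sin_int_mul_pi]
    unfold oscQ oscPhi0''
    rw [hs]
    ring
  · unfold oscQ oscPhi0''
    exact div_mul_cancel₀ _ h

/-- Core monotone-Wronskian contradiction. -/
lemma osc_core (a b : ℝ) (hab : a < b) (W W' : ℝ → ℝ)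
    (hd : ∀ y, HasDerivAt W (W' y) y)
    (hpos : ∀ y ∈ Ioo a b, 0 < W' y)
    (hWa : 0 ≤ W a) (hWb : W b ≤ 0) : False := by
  have hmono : StrictMonoOn W (Icc a b) := by
    apply strictMonoOn_of_deriv_pos (convex_Icc a b)
    · exact fun x _ => (hd x).continuousAt.continuousWithinAt
    · intro x hx
      rw [interior_Icc] at hx
      rw [(hd x).deriv]
      exact hpos x hx
  have := hmono ⟨le_refl a, le_of_lt hab⟩ ⟨le_of_lt hab, le_refl b⟩ hab
  linarith

lemma osc_slope_right (f : ℝ → ℝ) (f' a b : ℝ) (h : HasDerivAt f f' a)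
    (hab : a < b) (ha : f a = 0) (hpos : ∀ y ∈ Ioo a b, 0 ≤ f y) : 0 ≤ f' := by
  have ht : Filter.Tendsto (slope f a) (nhdsWithin a (Ioi a)) (nhds f') :=
    (hasDerivAt_iff_tendsto_slope.mp h).mono_left
      (nhdsWithin_mono a (fun x hx => ne_of_gt hx))
  refine ge_of_tendsto ht ?_
  filter_upwards [Ioo_mem_nhdsGT_of_mem ⟨le_refl a, hab⟩] with y hy
  rw [slope_def_field]
  have h1 : 0 ≤ f y := hpos y hy
  have h2 : 0 < y - a := by
    have := hy.1; linarith
  have he : (f y - f a) = f y := by rw [ha]; ring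
  rw [he]
  exact div_nonneg h1 (le_of_lt h2)

lemma osc_slope_left (f : ℝ → ℝ) (f' a b : ℝ) (h : HasDerivAt f f' b)
    (hab : a < b) (hb : f b = 0) (hpos : ∀ y ∈ Ioo a b, 0 ≤ f y) : f' ≤ 0 := by
  have ht : Filter.Tendsto (slope f b) (nhdsWithin b (Iio b)) (nhds f') :=
    (hasDerivAt_iff_tendsto_slope.mp h).mono_left
      (nhdsWithin_mono b (fun x hx => ne_of_lt hx))
  refine le_of_tendsto ht ?_
  filter_upwards [Ioo_mem_nhdsLT_of_mem ⟨hab, le_refl b⟩] with y hy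
  rw [slope_def_field]
  have h1 : 0 ≤ f y := hpos y hy
  have h2 : y - b < 0 := by
    have := hy.2; linarith
  have he : (f y - f b) = f y := by rw [hb]; ring
  rw [he]
  exact div_nonpos_of_nonneg_of_nonpos h1 (le_of_lt h2)

/-- The one-sided Sturm comparison contradiction. -/
lemma osc_side (n : ℕ) (A lam2 : ℝ) (hlam : lam2 < 0)
    (ψ ψ' ψ'' χ χ' χ'' : ℝ → ℝ)
    (hψ1 : ∀ y, HasDerivAt ψ (ψ' y) y)
    (hψ2 : ∀ y, HasDerivAt ψ' (ψ'' y) y)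
    (hχ1 : ∀ y, HasDerivAt χ (χ' y) y)
    (hχ2 : ∀ y, HasDerivAt χ' (χ'' y) y)
    (a b : ℝ) (hab : a < b)
    (heig : ∀ y ∈ Icc a b, ψ'' y = oscQ n A y * ψ y - lam2 * ψ y)
    (hχeig : ∀ y ∈ Icc a b, χ'' y = oscQ n A y * χ y)
    (hψa : ψ a = 0) (hψb : ψ b = 0)
    (hψpos : ∀ y ∈ Ioo a b, 0 < ψ y)
    (hχpos : ∀ y ∈ Ioo a b, 0 < χ y)
    (hχa : 0 ≤ χ a) (hχb : 0 ≤ χ b) : False := by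
  set W : ℝ → ℝ := fun y => ψ' y * χ y - ψ y * χ' y with hWdef
  set W' : ℝ → ℝ := fun y => ψ'' y * χ y - ψ y * χ'' y with hW'def
  have hW : ∀ y, HasDerivAt W (W' y) y := by
    intro y
    have := ((hψ2 y).mul (hχ1 y)).sub ((hψ1 y).mul (hχ2 y))
    refine this.congr_deriv ?_
    show _ = ψ'' y * χ y - ψ y * χ'' y
    ring
  have hψ'a : 0 ≤ ψ' a :=
    osc_slope_right ψ (ψ' a) a b (hψ1 a) hab hψa (fun y hy => le_of_lt (hψpos y hy))
  have hψ'b : ψ' b ≤ 0 :=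
    osc_slope_left ψ (ψ' b) a b (hψ1 b) hab hψb (fun y hy => le_of_lt (hψpos y hy))
  apply osc_core a b hab W W' hW
  · intro y hy
    have hyI : y ∈ Icc a b := ⟨le_of_lt hy.1, le_of_lt hy.2⟩
    have e1 := heig y hyI
    have e2 := hχeig y hyI
    simp only [hW'def]
    rw [e1, e2]
    have hp := hψpos y hy
    have hq := hχpos y hy
    have hr : (oscQ n A y * ψ y - lam2 * ψ y) * χ y - ψ y * (oscQ n A y * χ y)
        = (-lam2) * (ψ y * χ y) := by ring
    rw [hr]
    exact mul_pos (by linarith) (mul_pos hp hq)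
  · simp only [hWdef, hψa]
    have : ψ' a * χ a - 0 * χ' a = ψ' a * χ a := by ring
    rw [this]
    exact mul_nonneg hψ'a hχa
  · simp only [hWdef, hψb]
    have : ψ' b * χ b - 0 * χ' b = ψ' b * χ b := by ring
    rw [this]
    exact mul_nonpos_of_nonpos_of_nonneg hψ'b hχb

lemma osc_sign_const (f : ℝ → ℝ) (hf : Continuous f) (a b : ℝ)
    (hne : ∀ y ∈ Ioo a b, f y ≠ 0) :
    (∀ y ∈ Ioo a b, 0 < f y) ∨ (∀ y ∈ Ioo a b, f y < 0) := by
  by_contra h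
  push_neg at h
  obtain ⟨⟨u, hu, hu'⟩, ⟨v, hv, hv'⟩⟩ := h
  have h0 : (0:ℝ) ∈ uIcc (f u) (f v) := by
    rw [mem_uIcc]
    exact Or.inl ⟨hu', hv'⟩
  obtain ⟨c, hc, hfc⟩ := intermediate_value_uIcc (f := f) hf.continuousOn h0
  have hsub : uIcc u v ⊆ Ioo a b := (ordConnected_Ioo).uIcc_subset hu hv
  exact hne c (hsub hc) hfc

/-- The second Dirichlet eigenvalue of `L = -d²/dy² + Q` is nonnegative:
if `φ₂` is an eigenfunction with eigenvalue `λ₂` having exactly one zero in `(0,1)`,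
then `λ₂ ≥ 0`. -/
theorem second_eigenvalue_nonneg
    (n : ℕ) (hn : 1 ≤ n) (A : ℝ) (hA1 : 1 / (8 * π) < A) (hA2 : A < 1 / (4 * π))
    (lam2 : ℝ) (φ₂ : ℝ → ℝ) (hφ₂ : ContDiff ℝ 2 φ₂)
    (heig : ∀ y ∈ Set.Icc (0:ℝ) 1,
      -(deriv (deriv φ₂) y) + oscQ n A y * φ₂ y = lam2 * φ₂ y)
    (hbc0 : φ₂ 0 = 0) (hbc1 : φ₂ 1 = 0)
    (hzero : ∃! z, z ∈ Set.Ioo (0:ℝ) 1 ∧ φ₂ z = 0)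
    (hnontriv : ∃ y ∈ Set.Ioo (0:ℝ) 1, φ₂ y ≠ 0) :
    0 ≤ lam2 := by
  by_contra hlam'
  push_neg at hlam'
  obtain ⟨z, ⟨hzI, hzv⟩, huniq⟩ := hzero
  -- differentiability facts
  have hdiff1 : Differentiable ℝ φ₂ := hφ₂.differentiable (by norm_num)
  have hdiff2 : Differentiable ℝ (deriv φ₂) := by
    have h2 : ContDiff ℝ ((1:ℕ∞)+1) φ₂ := by exact_mod_cast hφ₂
    exact (contDiff_succ_iff_deriv.mp h2).2.2.differentiable (by norm_num)
  have hψ1 : ∀ y, HasDerivAt φ₂ (deriv φ₂ y) y := fun y => (hdiff1 y).hasDerivAt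
  have hψ2 : ∀ y, HasDerivAt (deriv φ₂) (deriv (deriv φ₂) y) y :=
    fun y => (hdiff2 y).hasDerivAt
  have hmono := oscPhi0_strictMono n hn A hA1 hA2
  have hhalf := oscPhi0_half n A
  -- rearranged eigen equation
  have heig' : ∀ y ∈ Icc (0:ℝ) 1,
      deriv (deriv φ₂) y = oscQ n A y * φ₂ y - lam2 * φ₂ y := by
    intro y hy
    have := heig y hy
    linarith
  have hχ1 := fun y => oscHasDeriv1 n hn A y
  have hχ2 := fun y => oscHasDeriv2 n hn A y
  have hQmul := fun y => oscQ_mul n hn A hA1 hA2 y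
  rcases le_total z (1/2) with hz2 | hz2
  · -- work on [0, z], χ = -phi0
    have hsub : Icc (0:ℝ) z ⊆ Icc 0 1 := Icc_subset_Icc le_rfl (le_of_lt hzI.2)
    have hne : ∀ y ∈ Ioo (0:ℝ) z, φ₂ y ≠ 0 := by
      intro y hy hc
      have hyI : y ∈ Ioo (0:ℝ) 1 := ⟨hy.1, lt_trans hy.2 hzI.2⟩
      have := huniq y ⟨hyI, hc⟩
      exact absurd this (ne_of_lt hy.2)
    have hχpos : ∀ y ∈ Ioo (0:ℝ) z, 0 < -oscPhi0 n A y := by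
      intro y hy
      have : oscPhi0 n A y < oscPhi0 n A (1/2) := hmono (lt_of_lt_of_le hy.2 hz2)
      rw [hhalf] at this
      linarith
    have hχ0 : 0 ≤ -oscPhi0 n A 0 := by
      have : oscPhi0 n A 0 < oscPhi0 n A (1/2) := hmono (by norm_num)
      rw [hhalf] at this
      linarith
    have hχz : 0 ≤ -oscPhi0 n A z := by
      have : oscPhi0 n A z ≤ oscPhi0 n A (1/2) := hmono.monotone hz2
      rw [hhalf] at this
      linarith
    have hχeig : ∀ y ∈ Icc (0:ℝ) z, -oscPhi0'' n A y = oscQ n A y * -oscPhi0 n A y := by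
      intro y _
      have := hQmul y
      linarith [this]
    rcases osc_sign_const φ₂ hφ₂.continuous 0 z hne with hpos | hneg
    · exact osc_side n A lam2 hlam' φ₂ (deriv φ₂) (deriv (deriv φ₂))
        (fun y => -oscPhi0 n A y) (fun y => -oscPhi0' n A y) (fun y => -oscPhi0'' n A y)
        hψ1 hψ2 (fun y => (hχ1 y).neg) (fun y => (hχ2 y).neg)
        0 z hzI.1
        (fun y hy => heig' y (hsub hy))
        hχeig hbc0 hzv hpos hχpos hχ0 hχz
    · exact osc_side n A lam2 hlam' (fun y => -φ₂ y) (fun y => -deriv φ₂ y)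
        (fun y => -deriv (deriv φ₂) y)
        (fun y => -oscPhi0 n A y) (fun y => -oscPhi0' n A y) (fun y => -oscPhi0'' n A y)
        (fun y => (hψ1 y).neg) (fun y => (hψ2 y).neg)
        (fun y => (hχ1 y).neg) (fun y => (hχ2 y).neg)
        0 z hzI.1
        (fun y hy => by have := heig' y (hsub hy); linarith)
        hχeig (by simp [hbc0]) (by simp [hzv])
        (fun y hy => by have := hneg y hy; linarith)
        hχpos hχ0 hχz
  · -- work on [z, 1], χ = phi0
    have hsub : Icc z (1:ℝ) ⊆ Icc 0 1 := Icc_subset_Icc (le_of_lt hzI.1) le_rfl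
    have hne : ∀ y ∈ Ioo z (1:ℝ), φ₂ y ≠ 0 := by
      intro y hy hc
      have hyI : y ∈ Ioo (0:ℝ) 1 := ⟨lt_trans hzI.1 hy.1, hy.2⟩
      have := huniq y ⟨hyI, hc⟩
      exact absurd this (ne_of_gt hy.1)
    have hχpos : ∀ y ∈ Ioo z (1:ℝ), 0 < oscPhi0 n A y := by
      intro y hy
      have : oscPhi0 n A (1/2) < oscPhi0 n A y := hmono (lt_of_le_of_lt hz2 hy.1)
      rw [hhalf] at this
      linarith
    have hχz : 0 ≤ oscPhi0 n A z := by
      have : oscPhi0 n A (1/2) ≤ oscPhi0 n A z := hmono.monotone hz2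
      rw [hhalf] at this
      linarith
    have hχ1' : 0 ≤ oscPhi0 n A 1 := by
      have : oscPhi0 n A (1/2) < oscPhi0 n A 1 := hmono (by norm_num)
      rw [hhalf] at this
      linarith
    have hχeig : ∀ y ∈ Icc z (1:ℝ), oscPhi0'' n A y = oscQ n A y * oscPhi0 n A y := by
      intro y _
      exact (hQmul y).symm
    rcases osc_sign_const φ₂ hφ₂.continuous z 1 hne with hpos | hneg
    · exact osc_side n A lam2 hlam' φ₂ (deriv φ₂) (deriv (deriv φ₂))
        (oscPhi0 n A) (oscPhi0' n A) (oscPhi0'' n A)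
        hψ1 hψ2 hχ1 hχ2
        z 1 hzI.2
        (fun y hy => heig' y (hsub hy))
        hχeig hzv hbc1 hpos hχpos hχz hχ1'
    · exact osc_side n A lam2 hlam' (fun y => -φ₂ y) (fun y => -deriv φ₂ y)
        (fun y => -deriv (deriv φ₂) y)
        (oscPhi0 n A) (oscPhi0' n A) (oscPhi0'' n A)
        (fun y => (hψ1 y).neg) (fun y => (hψ2 y).neg) hχ1 hχ2
        z 1 hzI.2
        (fun y hy => by have := heig' y (hsub hy); linarith)
        hχeig (by simp [hzv]) (by simp [hbc1])
        (fun y hy => by have := hneg y hy; linarith)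
        hχpos hχz hχ1'
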